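/- Let ε, δ > 0, let A, B : ℤ → ℝ be arbitrary sequences, and let α, ρ : ℤ → ℝ be sequences with no zeros. Define ω^m_n = α_{n+1} ρ_{m+1} · ( 1 − εδ · (Σ_k^n A_k/(α_{k+1}α_k)) · (Σ_l^m B_l/(ρ_{l+1}ρ_l)) ) (bidirectional sums). Then for all (n, m) ∈ ℤ²: ω^{m+1}_{n+1} ω^m_n − ω^m_{n+1} ω^{m+1}_n + εδ A_{n+1} B_{m+1} = 0; that is, ω is a solution of the discrete Liouville equation with data A, B. -/

import Mathlib

/-- Bidirectional sum: `Σ_k^n x_k = Σ_{k=1}^n x_k` for `n ≥ 1`, `0` for `n = 0`, and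
`−Σ_{k=n+1}^0 x_k` for `n ≤ −1`. -/
noncomputable def bsum (x : ℤ → ℝ) (n : ℤ) : ℝ :=
  if 1 ≤ n then ∑ k ∈ Finset.Icc (1:ℤ) n, x k
  else if n = 0 then 0
  else -∑ k ∈ Finset.Icc (n+1) (0:ℤ), x k

lemma bsum_succ (x : ℤ → ℝ) (n : ℤ) : bsum x (n+1) = bsum x n + x (n+1) := by
  rcases lt_trichotomy n 0 with h | h | h
  · -- n ≤ -1
    have h1 : ¬ (1 ≤ n) := by omega
    rcases eq_or_lt_of_le (by omega : n ≤ -1) with h2 | h2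
    · subst_vars
      simp [bsum]
    · have h3 : n + 1 ≠ 0 := by omega
      have h4 : ¬ (1 ≤ n + 1) := by omega
      have h5 : n ≠ 0 := by omega
      simp only [bsum, if_neg h1, if_neg h3, if_neg h4, if_neg h5]
      have : Finset.Icc (n+1) (0:ℤ) = insert (n+1) (Finset.Icc (n+2) 0) := by
        ext k; simp; omega
      rw [this, Finset.sum_insert (by simp)]
      ring
  · subst h; simp [bsum]
  · have h1 : 1 ≤ n := by omega
    have h2 : 1 ≤ n + 1 := by omega
    simp only [bsum, if_pos h1, if_pos h2]
    have : Finset.Icc (1:ℤ) (n+1) = insert (n+1) (Finset.Icc 1 n) := by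
      ext k; simp; omega
    rw [this, Finset.sum_insert (by simp), add_comm]

/-- The multiplicative general solution
`ω^m_n = α_{n+1}ρ_{m+1}(1 − εδ (Σ_k^n A_k/(α_{k+1}α_k)) (Σ_l^m B_l/(ρ_{l+1}ρ_l)))`
of the discrete Liouville equation with data `A`, `B`.  Here `ω n m` denotes `ω^m_n`. -/
theorem stmt15 (ε δ : ℝ) (hε : 0 < ε) (hδ : 0 < δ)
    (A B α ρ : ℤ → ℝ) (hα : ∀ n, α n ≠ 0) (hρ : ∀ m, ρ m ≠ 0)
    (ω : ℤ → ℤ → ℝ)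
    (hω : ∀ n m, ω n m = α (n+1) * ρ (m+1) *
      (1 - ε * δ * bsum (fun k => A k / (α (k+1) * α k)) n
        * bsum (fun l => B l / (ρ (l+1) * ρ l)) m)) :
    ∀ n m : ℤ,
      ω (n+1) (m+1) * ω n m - ω (n+1) m * ω n (m+1)
        + ε * δ * A (n+1) * B (m+1) = 0 := by
  intro n m
  have ha := bsum_succ (fun k => A k / (α (k+1) * α k)) n
  have hb := bsum_succ (fun l => B l / (ρ (l+1) * ρ l)) m
  simp only [hω, ha, hb]
  have h1 := hα (n+1)
  have h2 := hα (n+1+1)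
  have h3 := hρ (m+1)
  have h4 := hρ (m+1+1)
  field_simp
  ring
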